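/- Consider mechanism M3 (full information, proportional allocation, binary action space) with N users, reward R > c > 0, and types sorted nonincreasingly: 1 ≥ q_1 ≥ q_2 ≥ … ≥ q_N > 0. Suppose the index j (1 ≤ j ≤ N) satisfies R·q_j/(Σ_{k=1}^{j} q_k) > c and, in case j < N, also R·q_{j+1}/(Σ_{k=1}^{j+1} q_k) ≤ c. Then the profile with x_i = q_i for all 1 ≤ i ≤ j and x_i = 0 for all i > j is a pure Nash equilibrium. -/

import Mathlib

open Finset

/-- Proportional allocation reward: user `i` gets `R * x i / (∑ j, x j)` if she
contributes positively, and `0` otherwise. -/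
noncomputable def propReward {N : ℕ} (R : ℝ) (x : Fin N → ℝ) (i : Fin N) : ℝ :=
  if 0 < x i then R * x i / (∑ j, x j) else 0

/-- Utility in mechanism M3: proportional reward minus linear cost. -/
noncomputable def utilM3 {N : ℕ} (R c : ℝ) (q x : Fin N → ℝ) (i : Fin N) : ℝ :=
  propReward R x i - c * x i / q i

/-- Pure Nash equilibrium of mechanism M3 (binary action space `{0, q i}`):
every action is binary-feasible and no user can strictly increase her
utility by unilaterally switching her own action. -/
noncomputable def isPNE_M3 {N : ℕ} (R c : ℝ) (q : Fin N → ℝ) (x : Fin N → ℝ) : Prop :=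
  (∀ i, x i = 0 ∨ x i = q i) ∧
  ∀ i, ∀ y : ℝ, (y = 0 ∨ y = q i) →
    utilM3 R c q (Function.update x i y) i ≤ utilM3 R c q x i

theorem stmt_4 (N : ℕ) (R c : ℝ) (hc : 0 < c) (hRc : c < R)
    (q : Fin N → ℝ) (hq1 : ∀ i, q i ≤ 1) (hq0 : ∀ i, 0 < q i)
    (hsort : ∀ i j : Fin N, i ≤ j → q j ≤ q i)
    (j : Fin N)
    (hj : c < R * q j / (∑ k ∈ univ.filter (· ≤ j), q k))
    (hj1 : ∀ h : (j : ℕ) + 1 < N,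
      R * q ⟨(j : ℕ) + 1, h⟩ /
        ((∑ k ∈ univ.filter (· ≤ j), q k) + q ⟨(j : ℕ) + 1, h⟩) ≤ c) :
    isPNE_M3 R c q (fun i : Fin N => if i ≤ j then q i else 0) := by
  set S := ∑ k ∈ univ.filter (· ≤ j), q k with hS
  have hSpos : 0 < S := Finset.sum_pos (fun k _ => hq0 k) ⟨j, by simp⟩
  set x : Fin N → ℝ := fun i : Fin N => if i ≤ j then q i else 0 with hx
  have hsum : ∑ k, x k = S := by
    rw [hS, Finset.sum_filter]
  refine ⟨fun i => by by_cases h : i ≤ j <;> simp [hx, h], ?_⟩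
  intro i y hy
  by_cases hij : i ≤ j
  · have hxi : x i = q i := by simp [hx, hij]
    have hutil : utilM3 R c q x i = R * q i / S - c := by
      rw [utilM3, propReward, hsum, hxi, if_pos (hq0 i)]
      rw [mul_div_assoc c, div_self (hq0 i).ne', mul_one]
    rcases hy with rfl | rfl
    · have h0 : utilM3 R c q (Function.update x i 0) i = 0 := by
        simp [utilM3, propReward]
      rw [h0, hutil]
      have hqle : q j ≤ q i := hsort i j hij
      have h2 : c < R * q i / S := lt_of_lt_of_le hj (by
        rw [div_le_div_iff₀ hSpos hSpos]
        nlinarith [mul_le_mul_of_nonneg_right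
          (mul_le_mul_of_nonneg_left hqle (hc.trans hRc).le) hSpos.le])
      linarith
    · rw [← hxi, Function.update_eq_self]
  · have hxi : x i = 0 := by simp [hx, hij]
    have hutil : utilM3 R c q x i = 0 := by
      simp [utilM3, propReward, hxi]
    rcases hy with rfl | rfl
    · rw [← hxi, Function.update_eq_self]
    · rw [hutil, utilM3, propReward]
      have hsum2 : ∑ k, Function.update x i (q i) k = q i + S := by
        rw [Finset.sum_update_of_mem (mem_univ i),
          Finset.sum_sdiff_eq_sub (subset_univ _), hsum]
        simp [hxi]
      rw [Function.update_self, if_pos (hq0 i), hsum2,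
        mul_div_assoc c, div_self (hq0 i).ne', mul_one]
      -- j < i
      have hji : (j : ℕ) < (i : ℕ) := by
        exact_mod_cast lt_of_not_ge hij
      have h1 : (j : ℕ) + 1 < N := lt_of_le_of_lt hji i.isLt
      set j' : Fin N := ⟨(j : ℕ) + 1, h1⟩ with hj'
      have hqle : q i ≤ q j' := hsort j' i (by
        show ((j' : ℕ) : ℕ) ≤ (i : ℕ)
        simpa [hj'] using hji)
      have hkey : R * q j' / (S + q j') ≤ c := hj1 h1
      have hmono : R * q i / (q i + S) ≤ R * q j' / (S + q j') := by
        rw [div_le_div_iff₀ (by linarith [hq0 i]) (by linarith [hq0 j'])]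
        nlinarith [mul_le_mul_of_nonneg_right
          (mul_le_mul_of_nonneg_left hqle (hc.trans hRc).le) hSpos.le]
      linarith
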